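/- Let A_1, A_2, ..., A_N be events in a probability space such that the probability of each event is at most p. Suppose that for each index i there is a set Γ_i of at most d indices with i ∉ Γ_i such that for every set J of indices disjoint from Γ_i ∪ {i}, P(A_i ∩ ⋂_{j∈J} A_j^c) = P(A_i) · P(⋂_{j∈J} A_j^c) (i.e., A_i is mutually independent of all events A_j with j ∉ Γ_i ∪ {i}). If e·p·(d+1) ≤ 1 (where e is Euler's number), then P(⋂_{i=1}^N A_i^c) > 0. -/

import Mathlib

open MeasureTheory
open scoped ENNReal


theorem lll_aux
    {Ω : Type*} [MeasurableSpace Ω] (μ : Measure Ω) [IsProbabilityMeasure μ]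
    (N : ℕ) (A : Fin N → Set Ω) (hA : ∀ i, MeasurableSet (A i))
    (p : ℝ≥0∞) (hp : ∀ i, μ (A i) ≤ p)
    (d : ℕ) (Γ : Fin N → Finset (Fin N))
    (hΓcard : ∀ i, (Γ i).card ≤ d)
    (hInd : ∀ i : Fin N, ∀ J : Finset (Fin N),
      Disjoint J (insert i (Γ i)) →
      μ (A i ∩ ⋂ j ∈ J, (A j)ᶜ) = μ (A i) * μ (⋂ j ∈ J, (A j)ᶜ))
    (x : ℝ≥0∞) (hx1 : x < 1) (hpx : p ≤ x * (1 - x) ^ d) :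
    0 < μ (⋂ i, (A i)ᶜ) := by
  classical
  set B : Finset (Fin N) → Set Ω := fun S => ⋂ j ∈ S, (A j)ᶜ with hB
  have hBanti : ∀ {S T : Finset (Fin N)}, S ⊆ T → B T ⊆ B S := by
    intro S T hST ω hω
    simp only [hB, Set.mem_iInter] at hω ⊢
    exact fun j hj => hω j (hST hj)
  -- peel lemma
  have peel : ∀ (S : Finset (Fin N)) (j : Fin N),
      μ (A j ∩ B S) ≤ x * μ (B S) → (1 - x) * μ (B S) ≤ μ (B (insert j S)) := by
    intro S j h
    have hBins : B (insert j S) = B S \ A j := by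
      simp only [hB, Finset.set_biInter_insert]
      rw [Set.diff_eq, Set.inter_comm]
    have hadd : μ (B S ∩ A j) + μ (B S \ A j) = μ (B S) :=
      measure_inter_add_diff _ (hA j)
    have hdiff : μ (B S \ A j) = μ (B S) - μ (B S ∩ A j) :=
      ENNReal.eq_sub_of_add_eq (measure_ne_top μ _) (by rw [add_comm]; exact hadd)
    rw [hBins, hdiff]
    calc (1 - x) * μ (B S) = 1 * μ (B S) - x * μ (B S) := by
          rw [ENNReal.sub_mul]; intro _ _; exact measure_ne_top μ _
      _ = μ (B S) - x * μ (B S) := by rw [one_mul]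
      _ ≤ μ (B S) - μ (B S ∩ A j) := by
          apply tsub_le_tsub_left
          rw [Set.inter_comm]; exact h
  -- key lemma
  have key : ∀ n (S : Finset (Fin N)), S.card ≤ n → ∀ i, i ∉ S →
      μ (A i ∩ B S) ≤ x * μ (B S) := by
    intro n
    induction n with
    | zero =>
      intro S hS i hi
      have : S = ∅ := Finset.card_eq_zero.mp (Nat.le_zero.mp hS)
      subst this
      have hBempty : B ∅ = Set.univ := by simp [hB]
      rw [hBempty, Set.inter_univ, measure_univ, mul_one]
      calc μ (A i) ≤ p := hp i
        _ ≤ x * (1 - x) ^ d := hpx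
        _ ≤ x * 1 := by
            apply mul_le_mul_right
            exact pow_le_one' tsub_le_self d
        _ = x := mul_one x
    | succ n ih =>
      intro S hS i hi
      set S₁ := S ∩ Γ i with hS₁
      set S₂ := S \ Γ i with hS₂
      have hS12 : S₂ ∪ S₁ = S := by
        rw [hS₁, hS₂, Finset.sdiff_union_inter]
      have hdisj : Disjoint S₂ (insert i (Γ i)) := by
        rw [Finset.disjoint_insert_right]
        constructor
        · intro hmem; exact hi (Finset.mem_sdiff.mp hmem).1
        · exact Finset.sdiff_disjoint
      have hind := hInd i S₂ hdisj
      -- claim 2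
      have claim2 : ∀ T : Finset (Fin N), T ⊆ S₁ →
          (1 - x) ^ T.card * μ (B S₂) ≤ μ (B (S₂ ∪ T)) := by
        intro T
        induction T using Finset.induction_on with
        | empty => intro _; simp
        | @insert j T hj ihT =>
          intro hT
          have hjS₁ : j ∈ S₁ := hT (Finset.mem_insert_self j T)
          have hTS₁ : T ⊆ S₁ := fun a ha => hT (Finset.mem_insert_of_mem ha)
          have hjΓ : j ∈ Γ i := (Finset.mem_inter.mp hjS₁).2
          have hjS : j ∈ S := (Finset.mem_inter.mp hjS₁).1
          have hjS₂ : j ∉ S₂ := fun hmem => (Finset.mem_sdiff.mp hmem).2 hjΓ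
          have hjnotin : j ∉ S₂ ∪ T := by
            simp only [Finset.mem_union]
            rintro (h | h)
            · exact hjS₂ h
            · exact hj h
          have hsubset : S₂ ∪ T ⊆ S.erase j := by
            intro a ha
            rw [Finset.mem_erase]
            rcases Finset.mem_union.mp ha with h | h
            · exact ⟨fun he => hjS₂ (he ▸ h), (Finset.mem_sdiff.mp h).1⟩
            · refine ⟨fun he => hj (he ▸ h), (Finset.mem_inter.mp (hTS₁ h)).1⟩
          have hcard : (S₂ ∪ T).card ≤ n := by
            calc (S₂ ∪ T).card ≤ (S.erase j).card := Finset.card_le_card hsubset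
              _ = S.card - 1 := Finset.card_erase_of_mem hjS
              _ ≤ n := by omega
          have h1 := ih (S₂ ∪ T) hcard j hjnotin
          have h2 := peel (S₂ ∪ T) j h1
          calc (1 - x) ^ (insert j T).card * μ (B S₂)
              = (1 - x) * ((1 - x) ^ T.card * μ (B S₂)) := by
                rw [Finset.card_insert_of_notMem hj, pow_succ]; ring
            _ ≤ (1 - x) * μ (B (S₂ ∪ T)) := mul_le_mul_right (ihT hTS₁) _
            _ ≤ μ (B (insert j (S₂ ∪ T))) := h2
            _ = μ (B (S₂ ∪ insert j T)) := by rw [Finset.union_insert]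
      have hc2 := claim2 S₁ (le_refl S₁)
      rw [hS12] at hc2
      have hcardS₁ : S₁.card ≤ d :=
        le_trans (Finset.card_le_card (Finset.inter_subset_right)) (hΓcard i)
      calc μ (A i ∩ B S) ≤ μ (A i ∩ B S₂) := by
            apply measure_mono
            exact Set.inter_subset_inter_right _ (hBanti (hS12 ▸ Finset.subset_union_left))
        _ = μ (A i) * μ (B S₂) := hind
        _ ≤ p * μ (B S₂) := mul_le_mul_left (hp i) _
        _ ≤ (x * (1 - x) ^ d) * μ (B S₂) := mul_le_mul_left hpx _
        _ ≤ (x * (1 - x) ^ S₁.card) * μ (B S₂) := by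
            apply mul_le_mul_left
            apply mul_le_mul_right
            exact pow_le_pow_of_le_one zero_le tsub_le_self hcardS₁
        _ = x * ((1 - x) ^ S₁.card * μ (B S₂)) := by ring
        _ ≤ x * μ (B S) := mul_le_mul_right hc2 _
  -- final
  have final : ∀ S : Finset (Fin N), (1 - x) ^ S.card ≤ μ (B S) := by
    intro S
    induction S using Finset.induction_on with
    | empty => simp [hB]
    | @insert j S hj ihS =>
      calc (1 - x) ^ (insert j S).card = (1 - x) * (1 - x) ^ S.card := by
            rw [Finset.card_insert_of_notMem hj, pow_succ]; ring
        _ ≤ (1 - x) * μ (B S) := mul_le_mul_right ihS _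
        _ ≤ μ (B (insert j S)) := peel S j (key S.card S le_rfl j hj)
  have huniv : (⋂ i, (A i)ᶜ) = B Finset.univ := by
    simp [hB]
  rw [huniv]
  calc (0 : ℝ≥0∞) < (1 - x) ^ (Finset.univ : Finset (Fin N)).card := by
        apply ENNReal.pow_pos
        exact tsub_pos_of_lt hx1
    _ ≤ μ (B Finset.univ) := final _


-- real inequality for d ≥ 1
private lemma lll_real_ineq (d : ℕ) (hd : 0 < d) :
    (Real.exp 1 * ((d:ℝ) + 1))⁻¹ ≤ (1/((d:ℝ)+1)) * (1 - 1/((d:ℝ)+1)) ^ d := by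
  have hd0 : (0:ℝ) < d := by exact_mod_cast hd
  have hd1 : (0:ℝ) < (d:ℝ) + 1 := by linarith
  have h1 : ((d:ℝ)+1)/d ≤ Real.exp (1/d) := by
    have := Real.add_one_le_exp (1/(d:ℝ))
    calc ((d:ℝ)+1)/d = 1/(d:ℝ) + 1 := by field_simp; ring
      _ = 1/(d:ℝ) + 1 := by ring
      _ ≤ Real.exp (1/d) := this
  have h2 : (((d:ℝ)+1)/d) ^ d ≤ Real.exp 1 := by
    calc (((d:ℝ)+1)/d) ^ d ≤ (Real.exp (1/d)) ^ d := by
          apply pow_le_pow_left₀ (by positivity) h1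
      _ = Real.exp ((d:ℝ) * (1/d)) := by rw [← Real.exp_nat_mul]
      _ = Real.exp 1 := by rw [mul_one_div, div_self (ne_of_gt hd0)]
  have h3 : 1 - 1/((d:ℝ)+1) = (d:ℝ)/((d:ℝ)+1) := by field_simp; ring
  rw [h3]
  have h4 : ((d:ℝ)/((d:ℝ)+1)) ^ d = ((((d:ℝ)+1)/d) ^ d)⁻¹ := by
    rw [← inv_pow, inv_div]
  rw [h4]
  have hpow : (0:ℝ) < (((d:ℝ)+1)/d) ^ d := by positivity
  calc (Real.exp 1 * ((d:ℝ)+1))⁻¹ = ((d:ℝ)+1)⁻¹ * (Real.exp 1)⁻¹ := by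
        rw [mul_inv, mul_comm]
    _ ≤ ((d:ℝ)+1)⁻¹ * ((((d:ℝ)+1)/d) ^ d)⁻¹ := by
        apply mul_le_mul_of_nonneg_left _ (by positivity)
        exact inv_anti₀ hpow h2
    _ = 1/((d:ℝ)+1) * ((((d:ℝ)+1)/d) ^ d)⁻¹ := by rw [one_div]

private lemma lll_ennreal_ineq (p : ℝ≥0∞) (d : ℕ) (hd : 0 < d)
    (hLLL : ENNReal.ofReal (Real.exp 1) * p * (d + 1) ≤ 1) :
    p ≤ ENNReal.ofReal (1/((d:ℝ)+1)) * (1 - ENNReal.ofReal (1/((d:ℝ)+1))) ^ d := by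
  have he : (0:ℝ) < Real.exp 1 := Real.exp_pos 1
  have hd1 : (0:ℝ) < (d:ℝ) + 1 := by positivity
  have hx0 : (0:ℝ) ≤ 1/((d:ℝ)+1) := by positivity
  have hx1 : (1:ℝ)/((d:ℝ)+1) ≤ 1 := by
    rw [div_le_one hd1]; linarith [Nat.cast_nonneg (α := ℝ) d]
  have hp' : p ≤ (ENNReal.ofReal (Real.exp 1 * ((d:ℝ)+1)))⁻¹ := by
    rw [ENNReal.le_inv_iff_mul_le, ENNReal.ofReal_mul he.le]
    have hcast : ENNReal.ofReal ((d:ℝ)+1) = (d:ℝ≥0∞) + 1 := by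
      rw [ENNReal.ofReal_add (Nat.cast_nonneg d) zero_le_one,
        ENNReal.ofReal_natCast, ENNReal.ofReal_one]
    rw [hcast]
    calc p * (ENNReal.ofReal (Real.exp 1) * ((d:ℝ≥0∞) + 1))
        = ENNReal.ofReal (Real.exp 1) * p * ((d:ℝ≥0∞) + 1) := by ring
      _ ≤ 1 := hLLL
  have hsub : (1 : ℝ≥0∞) - ENNReal.ofReal (1/((d:ℝ)+1)) = ENNReal.ofReal (1 - 1/((d:ℝ)+1)) := by
    rw [ENNReal.ofReal_sub _ hx0, ENNReal.ofReal_one]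
  calc p ≤ (ENNReal.ofReal (Real.exp 1 * ((d:ℝ)+1)))⁻¹ := hp'
    _ = ENNReal.ofReal ((Real.exp 1 * ((d:ℝ)+1))⁻¹) := by
        rw [← ENNReal.ofReal_inv_of_pos (by positivity)]
    _ ≤ ENNReal.ofReal ((1/((d:ℝ)+1)) * (1 - 1/((d:ℝ)+1)) ^ d) :=
        ENNReal.ofReal_le_ofReal (lll_real_ineq d hd)
    _ = ENNReal.ofReal (1/((d:ℝ)+1)) * (1 - ENNReal.ofReal (1/((d:ℝ)+1))) ^ d := by
        rw [ENNReal.ofReal_mul hx0, ENNReal.ofReal_pow (by linarith), hsub]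

/-- **Lovász Local Lemma (symmetric version).** If each of the events `A 1, …, A N`
has probability at most `p`, each event `A i` is mutually independent of all events
`A j` with `j` outside a set `Γ i` of at most `d` other indices, and
`e · p · (d+1) ≤ 1`, then with positive probability none of the events holds. -/
theorem lovasz_local_lemma_symmetric
    {Ω : Type*} [MeasurableSpace Ω] (μ : Measure Ω) [IsProbabilityMeasure μ]
    (N : ℕ) (A : Fin N → Set Ω) (hA : ∀ i, MeasurableSet (A i))
    (p : ℝ≥0∞) (hp : ∀ i, μ (A i) ≤ p)
    (d : ℕ) (Γ : Fin N → Finset (Fin N))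
    (hΓcard : ∀ i, (Γ i).card ≤ d)
    (hΓself : ∀ i, i ∉ Γ i)
    (hInd : ∀ i : Fin N, ∀ J : Finset (Fin N),
      Disjoint J (insert i (Γ i)) →
      μ (A i ∩ ⋂ j ∈ J, (A j)ᶜ) = μ (A i) * μ (⋂ j ∈ J, (A j)ᶜ))
    (hLLL : ENNReal.ofReal (Real.exp 1) * p * (d + 1) ≤ 1) :
    0 < μ (⋂ i, (A i)ᶜ) := by
  rcases Nat.eq_zero_or_pos d with hd | hd
  · subst hd
    apply lll_aux μ N A hA p hp 0 Γ hΓcard hInd (ENNReal.ofReal (Real.exp 1))⁻¹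
    · rw [ENNReal.inv_lt_one, ENNReal.one_lt_ofReal]
      linarith [Real.add_one_le_exp (1:ℝ)]
    · rw [pow_zero, mul_one, ENNReal.le_inv_iff_mul_le]
      calc p * ENNReal.ofReal (Real.exp 1)
          = ENNReal.ofReal (Real.exp 1) * p * ((0:ℕ) + 1) := by push_cast; ring
        _ ≤ 1 := hLLL
  · apply lll_aux μ N A hA p hp d Γ hΓcard hInd (ENNReal.ofReal (1/((d:ℝ)+1)))
    · apply lt_of_lt_of_le (ENNReal.ofReal_lt_one.mpr ?_) le_rfl
      rw [div_lt_one (by positivity)]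
      have : (1:ℝ) ≤ d := by exact_mod_cast hd
      linarith
    · exact lll_ennreal_ineq p d hd hLLL
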